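/- Let G be a graph on n vertices that is an odd cycle, and let A be an n×n complex positive semidefinite matrix that is lossless (all off-diagonal entries purely imaginary or zero) and fits G (for i ≠ k, A_{ik} ≠ 0 iff (i,k) is an edge of G). Then rank(A) ≥ n - 1. -/

import Mathlib

open ComplexOrder

section OddCycleAux

open Fin.CommRing

variable {n : ℕ}

/-- Adjacency in the cycle graph, rephrased. -/
private lemma cycle_adj_iff [NeZero n] (hn : 3 ≤ n) (i j : Fin n) :
    (SimpleGraph.cycleGraph n).Adj i j ↔ (j = i - 1 ∨ j = i + 1) := by
  have hone : (1 : Fin n).val = 1 := by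
    rw [Fin.val_one']; exact Nat.mod_eq_of_lt (by omega)
  rw [SimpleGraph.cycleGraph_adj']
  have h1 : (i - j).val = 1 ↔ i - j = 1 := by rw [Fin.ext_iff, hone]
  have h2 : (j - i).val = 1 ↔ j - i = 1 := by rw [Fin.ext_iff, hone]
  rw [h1, h2]
  constructor
  · rintro (h | h)
    · left; rw [sub_eq_iff_eq_add.mp h]; ring
    · right; rw [sub_eq_iff_eq_add.mp h]; ring
  · rintro (h | h)
    · left; rw [h]; ring
    · right; rw [h]; ring

private lemma fin_one_ne_zero' [NeZero n] (hn : 3 ≤ n) : (1 : Fin n) ≠ 0 := by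
  have hone : (1 : Fin n).val = 1 := by
    rw [Fin.val_one']; exact Nat.mod_eq_of_lt (by omega)
  intro h
  rw [Fin.ext_iff, hone] at h
  simp at h

private lemma fin_two_ne_zero' [NeZero n] (hn : 3 ≤ n) : (2 : Fin n) ≠ 0 := by
  have htwo : ((2 : ℕ) : Fin n) = (2 : Fin n) := by push_cast; ring
  intro h
  rw [← htwo, Fin.natCast_eq_zero] at h
  have := Nat.le_of_dvd (by norm_num) h
  omega

/-- Key lemma: a kernel vector of a lossless matrix fitting an odd cycle with
`(v 0).im = 0` and `(v 1).re = 0` vanishes. -/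
private lemma kernel_vec_eq_zero [NeZero n] (hn : 3 ≤ n) (hodd : Odd n)
    (A : Matrix (Fin n) (Fin n) ℂ)
    (hdiag : ∀ i, (A i i).im = 0)
    (hlossless : ∀ i k : Fin n, i ≠ k → (A i k).re = 0)
    (hfit : ∀ i k : Fin n, i ≠ k →
      (A i k ≠ 0 ↔ (SimpleGraph.cycleGraph n).Adj i k))
    (v : Fin n → ℂ) (hv : A.mulVec v = 0)
    (h0 : (v 0).im = 0) (h1 : (v 1).re = 0) : v = 0 := by
  -- basic distinctness facts
  have hm1 : ∀ i : Fin n, i - 1 ≠ i := by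
    intro i h
    have h2 : i + 1 = i + 0 := by
      conv_lhs => rw [← h]
      ring
    exact fin_one_ne_zero' hn (add_left_cancel h2)
  have hp1 : ∀ i : Fin n, i + 1 ≠ i := by
    intro i h
    have h2 : i + 1 = i + 0 := by rw [h]; ring
    exact fin_one_ne_zero' hn (add_left_cancel h2)
  have hmp : ∀ i : Fin n, i - 1 ≠ i + 1 := by
    intro i h
    have h2 : i + 2 = i + 0 := by
      have h3 : (i + 1) + 1 = (i - 1) + 1 := by rw [h]
      calc i + 2 = (i + 1) + 1 := by ring
        _ = (i - 1) + 1 := h3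
        _ = i + 0 := by ring
    exact fin_two_ne_zero' hn (add_left_cancel h2)
  -- the three-term row equation
  have hrow : ∀ i : Fin n,
      A i (i - 1) * v (i - 1) + A i i * v i + A i (i + 1) * v (i + 1) = 0 := by
    intro i
    have h := congrFun hv i
    have hsum : (A.mulVec v) i = ∑ j : Fin n, A i j * v j := by
      simp [Matrix.mulVec, dotProduct]
    have hzero : ∀ j ∈ Finset.univ, j ∉ ({i - 1, i, i + 1} : Finset (Fin n)) →
        A i j * v j = 0 := by
      intro j _ hj
      simp only [Finset.mem_insert, Finset.mem_singleton, not_or] at hj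
      obtain ⟨hj1, hj2, hj3⟩ := hj
      have hne : i ≠ j := fun h' => hj2 h'.symm
      have hna : ¬ (SimpleGraph.cycleGraph n).Adj i j := by
        rw [cycle_adj_iff hn]
        rintro (h' | h')
        · exact hj1 h'
        · exact hj3 h'
      have : A i j = 0 := not_not.mp (fun hne0 => hna ((hfit i j hne).mp hne0))
      rw [this, zero_mul]
    have hsub : ∑ j ∈ ({i - 1, i, i + 1} : Finset (Fin n)), A i j * v j
        = ∑ j : Fin n, A i j * v j :=
      Finset.sum_subset (Finset.subset_univ _) hzero
    have hexp : ∑ j ∈ ({i - 1, i, i + 1} : Finset (Fin n)), A i j * v j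
        = A i (i - 1) * v (i - 1) + A i i * v i + A i (i + 1) * v (i + 1) := by
      rw [Finset.sum_insert (by simp [hm1 i, hmp i]),
        Finset.sum_insert (by simp [(hp1 i).symm]), Finset.sum_singleton]
      ring
    rw [← hexp, hsub, ← hsum, h]
    simp
  -- nonvanishing of the forward coefficient
  have hcoef : ∀ i : Fin n, (A i (i+1)).im ≠ 0 := by
    intro i h
    have hadj : (SimpleGraph.cycleGraph n).Adj i (i+1) :=
      (cycle_adj_iff hn i (i+1)).mpr (Or.inr rfl)
    have hne0 : A i (i+1) ≠ 0 := (hfit i (i+1) (hp1 i).symm).mpr hadj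
    exact hne0 (Complex.ext (hlossless i (i+1) (hp1 i).symm) h)
  -- the walk function
  set f : ℕ → ℝ := fun k =>
    if Even k then (v ((k : ℕ) : Fin n)).im else (v ((k : ℕ) : Fin n)).re with hf
  have step : ∀ k : ℕ, f k = 0 → f (k+1) = 0 → f (k+2) = 0 := by
    intro k hk hk1
    set i : Fin n := ((k+1 : ℕ) : Fin n) with hi
    have him1 : ((k : ℕ) : Fin n) = i - 1 := by rw [hi]; push_cast; ring
    have hip1 : ((k+2 : ℕ) : Fin n) = i + 1 := by rw [hi]; push_cast; ring
    have hrea : (A i (i-1)).re = 0 := hlossless i (i-1) (hm1 i).symm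
    have hreb : (A i (i+1)).re = 0 := hlossless i (i+1) (hp1 i).symm
    rcases Nat.even_or_odd k with hek | hok
    · -- k even: k+1 odd, k+2 even
      have e1 : ¬ Even (k+1) := by simp [Nat.even_add_one, hek]
      have e2 : Even (k+2) := by simp [Nat.even_add_one, Nat.not_even_iff_odd,
        Nat.odd_add_one, hek]
      have fk : (v (i-1)).im = 0 := by
        rw [← him1]; simpa [hf, hek] using hk
      have fk1 : (v i).re = 0 := by
        rw [hi]; simpa [hf, e1] using hk1
      have h := congrArg Complex.re (hrow i)
      simp only [Complex.add_re, Complex.mul_re, Complex.zero_re] at h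
      rw [hrea, hreb, hdiag i, fk, fk1] at h
      have hmul : (A i (i+1)).im * (v (i+1)).im = 0 := by
        simpa using h
      have : (v (i+1)).im = 0 :=
        (mul_eq_zero.mp hmul).resolve_left (hcoef i)
      rw [hf]
      simp only [e2, if_pos]
      rw [hip1]
      exact this
    · -- k odd: k+1 even, k+2 odd
      have e1 : Even (k+1) := by
        simpa [Nat.even_add_one, Nat.not_even_iff_odd] using hok
      have e2 : ¬ Even (k+2) := by
        simp [Nat.even_add_one, Nat.not_even_iff_odd, Nat.odd_add_one,
          Nat.not_even_iff_odd.mpr hok]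
      have fk : (v (i-1)).re = 0 := by
        rw [← him1]; simpa [hf, Nat.not_even_iff_odd.mpr hok] using hk
      have fk1 : (v i).im = 0 := by
        rw [hi]; simpa [hf, e1] using hk1
      have h := congrArg Complex.im (hrow i)
      simp only [Complex.add_im, Complex.mul_im, Complex.zero_im] at h
      rw [hrea, hreb, hdiag i, fk, fk1] at h
      have hmul : (A i (i+1)).im * (v (i+1)).re = 0 := by
        simpa using h
      have : (v (i+1)).re = 0 :=
        (mul_eq_zero.mp hmul).resolve_left (hcoef i)
      rw [hf]
      simp only [e2, if_neg, if_false]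
      rw [hip1]
      exact this
  have hall : ∀ k : ℕ, f k = 0 ∧ f (k+1) = 0 := by
    intro k
    induction k with
    | zero =>
      constructor
      · simpa [hf] using h0
      · simpa [hf] using h1
    | succ k ih => exact ⟨ih.2, step k ih.1 ih.2⟩
  have hnodd : ¬ Even n := Nat.not_even_iff_odd.mpr hodd
  funext j
  have hcast : ((j.val + n : ℕ) : Fin n) = j := by
    push_cast
    simp [Fin.cast_val_eq_self]
  have hre : (v j).re = 0 := by
    rcases Nat.even_or_odd j.val with hje | hjo
    · have hk := (hall (j.val + n)).1
      have hpar : ¬ Even (j.val + n) := by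
        simp [Nat.even_add, hje, hnodd]
      simpa [hf, hpar, hcast] using hk
    · have hk := (hall j.val).1
      simpa [hf, Nat.not_even_iff_odd.mpr hjo, Fin.cast_val_eq_self] using hk
  have him : (v j).im = 0 := by
    rcases Nat.even_or_odd j.val with hje | hjo
    · have hk := (hall j.val).1
      simpa [hf, hje, Fin.cast_val_eq_self] using hk
    · have hk := (hall (j.val + n)).1
      have hpar : Even (j.val + n) := by
        rw [Nat.even_add]
        simp [Nat.not_even_iff_odd.mpr hjo, hnodd]
      simpa [hf, hpar, hcast] using hk
  exact Complex.ext hre him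

end OddCycleAux

/-- If `G` is an odd cycle on `n` vertices and `A` is an `n × n` complex
positive semidefinite lossless matrix (all off-diagonal entries purely imaginary or
zero) that fits `G`, then `rank(A) ≥ n - 1`. -/
theorem rank_ge_of_lossless_fits_odd_cycle
    (n : ℕ) (hn : 3 ≤ n) (hodd : Odd n)
    (A : Matrix (Fin n) (Fin n) ℂ)
    (hpsd : A.PosSemidef)
    (hlossless : ∀ i k : Fin n, i ≠ k → (A i k).re = 0)
    (hfit : ∀ i k : Fin n, i ≠ k →
      (A i k ≠ 0 ↔ (SimpleGraph.cycleGraph n).Adj i k)) :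
    n - 1 ≤ A.rank := by
  haveI : NeZero n := ⟨by omega⟩
  have hHerm := hpsd.isHermitian
  have hdiag : ∀ i, (A i i).im = 0 := by
    intro i
    have h := congrFun (congrFun hHerm i) i
    rw [Matrix.conjTranspose_apply] at h
    exact Complex.conj_eq_iff_im.mp h
  have hK : True := trivial
  -- the real-linear "corner" map
  let φ : (Fin n → ℂ) →ₗ[ℝ] ℝ × ℝ :=
    { toFun := fun v => ((v 0).im, (v 1).re)
      map_add' := by intro x y; simp
      map_smul' := by intro r x; simp [Complex.smul_im, Complex.smul_re] }
  let ψ : LinearMap.ker A.mulVecLin →ₗ[ℝ] ℝ × ℝ :=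
    φ.comp ((LinearMap.ker A.mulVecLin).subtype.restrictScalars ℝ)
  have hinj : Function.Injective ψ := by
    intro x y hxy
    set d : Fin n → ℂ := (x : Fin n → ℂ) - (y : Fin n → ℂ) with hd
    have hker : A.mulVec d = 0 := by
      have hx : A.mulVecLin (x : Fin n → ℂ) = 0 := LinearMap.mem_ker.mp x.2
      have hy : A.mulVecLin (y : Fin n → ℂ) = 0 := LinearMap.mem_ker.mp y.2
      have : A.mulVecLin d = 0 := by rw [hd, map_sub, hx, hy, sub_zero]
      simpa [Matrix.mulVecLin_apply] using this
    have h0' : (d 0).im = 0 := by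
      have h := congrArg Prod.fst hxy
      simp only [ψ, φ, LinearMap.comp_apply, LinearMap.coe_mk, AddHom.coe_mk,
        LinearMap.coe_restrictScalars, Submodule.coe_subtype] at h
      simp [hd, Pi.sub_apply, Complex.sub_im, h]
    have h1' : (d 1).re = 0 := by
      have h := congrArg Prod.snd hxy
      simp only [ψ, φ, LinearMap.comp_apply, LinearMap.coe_mk, AddHom.coe_mk,
        LinearMap.coe_restrictScalars, Submodule.coe_subtype] at h
      simp [hd, Pi.sub_apply, Complex.sub_re, h]
    have hzero : d = 0 :=
      kernel_vec_eq_zero hn hodd A hdiag hlossless hfit d hker h0' h1'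
    exact Subtype.ext (sub_eq_zero.mp (by rw [← hd]; exact hzero))
  have hfinR : Module.finrank ℝ (LinearMap.ker A.mulVecLin) ≤ 2 := by
    have h := LinearMap.finrank_le_finrank_of_injective hinj
    simpa using h
  have htower : Module.finrank ℝ ℂ * Module.finrank ℂ (LinearMap.ker A.mulVecLin)
      = Module.finrank ℝ (LinearMap.ker A.mulVecLin) :=
    Module.finrank_mul_finrank ℝ ℂ (LinearMap.ker A.mulVecLin)
  rw [Complex.finrank_real_complex] at htower
  have hfinC : Module.finrank ℂ (LinearMap.ker A.mulVecLin) ≤ 1 := by omega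
  have hrn := LinearMap.finrank_range_add_finrank_ker A.mulVecLin
  rw [Module.finrank_fin_fun] at hrn
  have hrank : A.rank = Module.finrank ℂ (LinearMap.range A.mulVecLin) := rfl
  omega
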